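/- Let T : [a,b] × [c,d] → ℝ be the function built from a continuous generating function φ : [a₀,a₁] × [c,d] → ℝ with φ(a₀,y) = φ(a₁,y) for all y ∈ [c,d], as in the stated construction. If there exists y₀ ∈ [c,d] such that x ↦ φ(x, y₀) is non-constant on [a₀,a₁], then T is not of bounded variation in the sense of Arzelà on [a,b] × [c,d]. -/

import Mathlib

open MeasureTheory Set Filter
open scoped Classical

/-- Mixed (left-hand sided) Katugampola fractional integral of a bivariate function. -/
noncomputable def mixedKI (a c p q α β : ℝ) (f : ℝ → ℝ → ℝ) (x y : ℝ) : ℝ :=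
  ((p + 1) ^ (1 - α) * (q + 1) ^ (1 - β) / (Real.Gamma α * Real.Gamma β)) *
    ∫ s in a..x, ∫ t in c..y,
      (x ^ (p + 1) - s ^ (p + 1)) ^ (α - 1) * (y ^ (q + 1) - t ^ (q + 1)) ^ (β - 1)
        * s ^ p * t ^ q * f s t

/-- Univariate Katugampola fractional integral. -/
noncomputable def KI (a p α : ℝ) (g : ℝ → ℝ) (x : ℝ) : ℝ :=
  ((p + 1) ^ (1 - α) / Real.Gamma α) *
    ∫ t in a..x, (x ^ (p + 1) - t ^ (p + 1)) ^ (α - 1) * t ^ p * g t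

/-- Bounded variation in the sense of Arzelà on `[a,b] × [c,d]`. -/
def ArzelaBV (a b c d : ℝ) (f : ℝ → ℝ → ℝ) : Prop :=
  ∃ M > 0, ∀ (m : ℕ) (x y : ℕ → ℝ),
    x 0 = a → x m = b → y 0 = c → y m = d →
    (∀ i < m, x i ≤ x (i + 1)) → (∀ i < m, y i ≤ y (i + 1)) →
    ∑ i ∈ Finset.range m, |f (x (i + 1)) (y (i + 1)) - f (x i) (y i)| ≤ M

/-- A bounded bivariate function, monotone (nondecreasing) in each variable on the rectangle. -/
def MonotoneRect (a b c d : ℝ) (g : ℝ → ℝ → ℝ) : Prop :=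
  (∃ M : ℝ, ∀ x ∈ Icc a b, ∀ y ∈ Icc c d, |g x y| ≤ M) ∧
  (∀ x ∈ Icc a b, ∀ x' ∈ Icc a b, x ≤ x' → ∀ y ∈ Icc c d, g x y ≤ g x' y) ∧
  (∀ y ∈ Icc c d, ∀ y' ∈ Icc c d, y ≤ y' → ∀ x ∈ Icc a b, g x y ≤ g x y')

/-- Graph of a bivariate function over the rectangle `[a,b] × [c,d]`, as a subset of `ℝ³`. -/
def graphRect (a b c d : ℝ) (f : ℝ → ℝ → ℝ) : Set (ℝ × ℝ × ℝ) :=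
  {p | p.1 ∈ Icc a b ∧ p.2.1 ∈ Icc c d ∧ p.2.2 = f p.1 p.2.1}

/-- A cube of the standard `δ`-mesh of `ℝ³`. -/
def meshCube (δ : ℝ) (i j k : ℤ) : Set (ℝ × ℝ × ℝ) :=
  Icc (i * δ) ((i + 1) * δ) ×ˢ Icc (j * δ) ((j + 1) * δ) ×ˢ Icc (k * δ) ((k + 1) * δ)

/-- Number of `δ`-mesh cubes of `ℝ³` that intersect `S`. -/
noncomputable def meshCount (δ : ℝ) (S : Set (ℝ × ℝ × ℝ)) : ℕ :=
  Nat.card {p : ℤ × ℤ × ℤ | (meshCube δ p.1 p.2.1 p.2.2 ∩ S).Nonempty}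

/-- Upper box (Minkowski) dimension of a subset of `ℝ³`. -/
noncomputable def upperBoxDim (S : Set (ℝ × ℝ × ℝ)) : ℝ :=
  limsup (fun δ : ℝ => Real.log (meshCount δ S) / (-Real.log δ)) (nhdsWithin 0 (Ioi 0))

/-- Lower box (Minkowski) dimension of a subset of `ℝ³`. -/
noncomputable def lowerBoxDim (S : Set (ℝ × ℝ × ℝ)) : ℝ :=
  liminf (fun δ : ℝ => Real.log (meshCount δ S) / (-Real.log δ)) (nhdsWithin 0 (Ioi 0))

/-- Maximum range of `f` over a subset `A` of the plane. -/
noncomputable def Rf (f : ℝ → ℝ → ℝ) (A : Set (ℝ × ℝ)) : ℝ :=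
  sSup {r | ∃ p ∈ A, ∃ q ∈ A, r = |f p.1 p.2 - f q.1 q.2|}

/-- The `(i,j)`-th sub-rectangle of the `m × n` uniform partition of `[a,b] × [c,d]`. -/
def subRect (a b c d : ℝ) (m n : ℕ) (i j : ℕ) : Set (ℝ × ℝ) :=
  Icc (a + ((i : ℝ) - 1) * (b - a) / m) (a + (i : ℝ) * (b - a) / m) ×ˢ
    Icc (c + ((j : ℝ) - 1) * (d - c) / n) (c + (j : ℝ) * (d - c) / n)

/-- The sequence `a₀ = a`, `aₙ = a + (b-a)/2 + ⋯ + (b-a)/2ⁿ = b - (b-a)/2ⁿ`. -/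
noncomputable def aseq (a b : ℝ) (n : ℕ) : ℝ := b - (b - a) / 2 ^ n

/-- The affine map `ψₙ : [aₙ₋₁, aₙ] → [a₀, a₁]`. -/
noncomputable def psiN (a b : ℝ) (n : ℕ) (x : ℝ) : ℝ :=
  2 ^ n * ((aseq a b 1 - aseq a b 0) * x + aseq a b 0 * aseq a b n
    - aseq a b 1 * aseq a b (n - 1)) / (b - a)

/-- The function `Fₙ(x,y) = (1/n) φ(ψₙ(x), y) + ((n-1)/n) φ(a₀, y)` (for `n = 1` this is `φ`). -/
noncomputable def Fseq (a b : ℝ) (φ : ℝ → ℝ → ℝ) (n : ℕ) (x y : ℝ) : ℝ :=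
  (1 / (n : ℝ)) * φ (psiN a b n x) y + (((n : ℝ) - 1) / (n : ℝ)) * φ (aseq a b 0) y


/-- if the generating function `φ` is non-constant along some
horizontal line, then the construction `T` is not of bounded variation in the
sense of Arzelà. -/
theorem construction_not_arzelaBV (a b c d : ℝ) (hab : a < b) (hcd : c < d)
    (φ : ℝ → ℝ → ℝ)
    (hφcont : ContinuousOn (fun pt : ℝ × ℝ => φ pt.1 pt.2) (Icc a (aseq a b 1) ×ˢ Icc c d))
    (hφper : ∀ y ∈ Icc c d, φ a y = φ (aseq a b 1) y)
    (T : ℝ → ℝ → ℝ)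
    (hT : ∀ n : ℕ, 1 ≤ n → ∀ x ∈ Icc (aseq a b (n - 1)) (aseq a b n), ∀ y ∈ Icc c d,
      T x y = Fseq a b φ n x y)
    (hTb : ∀ y ∈ Icc c d, T b y = φ a y)
    (hnc : ∃ y₀ ∈ Icc c d, ∃ t ∈ Icc a (aseq a b 1), ∃ u ∈ Icc a (aseq a b 1),
      φ t y₀ ≠ φ u y₀) :
    ¬ ArzelaBV a b c d T := by
  obtain ⟨y₀, hy₀, t0, ht0, u0, hu0, hne0⟩ := hnc
  obtain ⟨t, ht, u, hu, htu, hne⟩ :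
      ∃ t ∈ Icc a (aseq a b 1), ∃ u ∈ Icc a (aseq a b 1), t ≤ u ∧ φ t y₀ ≠ φ u y₀ := by
    rcases le_total t0 u0 with h | h
    · exact ⟨t0, ht0, u0, hu0, h, hne0⟩
    · exact ⟨u0, hu0, t0, ht0, h, hne0.symm⟩
  rintro ⟨M, hM, hbound⟩
  have hba : b - a ≠ 0 := sub_ne_zero.mpr hab.ne'
  have ha0 : aseq a b 0 = a := by simp [aseq]
  have haseq_le_b : ∀ n, aseq a b n ≤ b := by
    intro n
    have : 0 ≤ (b - a) / 2 ^ n := div_nonneg (by linarith) (by positivity)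
    simp only [aseq]; linarith
  -- the preimage points of t and u in the n-th interval
  set tn : ℕ → ℝ := fun m => aseq a b m + (t - a) / 2 ^ m with htn
  set un : ℕ → ℝ := fun m => aseq a b m + (u - a) / 2 ^ m with hun
  have hpsi : ∀ (m : ℕ) (s : ℝ), psiN a b (m+1) (aseq a b m + (s - a)/2^m) = s := by
    intro m s
    have h2 : (2:ℝ)^m ≠ 0 := by positivity
    simp only [psiN, aseq, Nat.add_sub_cancel]
    field_simp
    ring
  have hbnd : ∀ (m : ℕ), ∀ s ∈ Icc a (aseq a b 1),
      aseq a b m ≤ aseq a b m + (s - a)/2^m ∧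
      aseq a b m + (s - a)/2^m ≤ aseq a b (m+1) := by
    intro m s hs
    have h2 : (0:ℝ) < 2^m := by positivity
    constructor
    · have : 0 ≤ (s - a) / 2^m := by
        apply div_nonneg _ h2.le; linarith [hs.1]
      linarith
    · have hs2 : s - a ≤ (b - a) / 2 := by
        have := hs.2; simp only [aseq] at this; linarith
      have h3 : (s - a) / 2^m ≤ ((b - a)/2) / 2^m := by gcongr
      have heq : aseq a b (m+1) - aseq a b m = ((b-a)/2) / 2^m := by
        simp only [aseq, pow_succ]; ring
      linarith
  have hTval : ∀ (m : ℕ), ∀ s ∈ Icc a (aseq a b 1),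
      T (aseq a b m + (s - a)/2^m) y₀
        = (1 / (m+1 : ℝ)) * φ s y₀ + ((m : ℝ) / (m+1 : ℝ)) * φ a y₀ := by
    intro m s hs
    have hmem : aseq a b m + (s - a)/2^m ∈ Icc (aseq a b ((m+1) - 1)) (aseq a b (m+1)) := by
      simpa using hbnd m s hs
    have := hT (m+1) (by omega) _ hmem y₀ hy₀
    rw [this, Fseq, hpsi, ha0]
    push_cast
    ring_nf
  set ε : ℝ := |φ u y₀ - φ t y₀| with hε
  have hεpos : 0 < ε := abs_pos.mpr (sub_ne_zero.mpr (Ne.symm hne))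
  have hdiff : ∀ m : ℕ, |T (un m) y₀ - T (tn m) y₀| = ε / (m+1 : ℝ) := by
    intro m
    have hm1 : (0:ℝ) < (m:ℝ) + 1 := by positivity
    show |T (aseq a b m + (u - a)/2^m) y₀ - T (aseq a b m + (t - a)/2^m) y₀| = _
    rw [hTval m u hu, hTval m t ht,
      show (1 / ((m:ℝ)+1)) * φ u y₀ + ((m:ℝ)/((m:ℝ)+1)) * φ a y₀
          - ((1 / ((m:ℝ)+1)) * φ t y₀ + ((m:ℝ)/((m:ℝ)+1)) * φ a y₀)
        = (φ u y₀ - φ t y₀) / ((m:ℝ)+1) from by ring,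
      abs_div, abs_of_pos hm1]
  -- interval/ordering facts
  have hlow : ∀ m, aseq a b m ≤ tn m := fun m => (hbnd m t ht).1
  have hhigh : ∀ m, un m ≤ aseq a b (m+1) := fun m => (hbnd m u hu).2
  have htnun : ∀ m, tn m ≤ un m := by
    intro m
    have : (t - a)/2^m ≤ (u - a)/2^m := by gcongr
    simp only [htn, hun]; linarith
  have hchain : ∀ m, un m ≤ tn (m+1) := fun m => (hhigh m).trans (hlow (m+1))
  have hun_le_b : ∀ m, un m ≤ b := fun m => (hhigh m).trans (haseq_le_b _)
  -- choose N with ε * H_N > M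
  obtain ⟨N, hNM, hN1⟩ : ∃ N : ℕ,
      M < ε * ∑ i ∈ Finset.range N, (1 / (i + 1) : ℝ) ∧ 1 ≤ N := by
    have h := (Real.tendsto_sum_range_one_div_nat_succ_atTop.const_mul_atTop hεpos)
    exact ((h.eventually_gt_atTop M).and (eventually_ge_atTop 1)).exists
  -- the chain
  set X : ℕ → ℝ := fun i => if i = 0 then a else if 2*N+1 ≤ i then b
    else if i % 2 = 1 then tn (i/2) else un (i/2 - 1) with hX
  set Y : ℕ → ℝ := fun i => if i = 0 then c else if 2*N+1 ≤ i then d else y₀ with hY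
  have hX0 : X 0 = a := by simp [hX]
  have hXb : ∀ i, 2*N+1 ≤ i → X i = b := by
    intro i h
    simp only [hX]
    rw [if_neg (by omega), if_pos h]
  have hXodd : ∀ n, n < N → X (2*n+1) = tn n := by
    intro n h
    simp only [hX]
    rw [if_neg (by omega), if_neg (by omega), if_pos (by omega),
      show (2*n+1)/2 = n from by omega]
  have hXeven : ∀ n, n < N → X (2*n+2) = un n := by
    intro n h
    simp only [hX]
    rw [if_neg (by omega), if_neg (by omega), if_neg (by omega),
      show (2*n+2)/2 - 1 = n from by omega]
  have hYmid : ∀ i, 1 ≤ i → i ≤ 2*N → Y i = y₀ := by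
    intro i h1 h2
    simp only [hY]
    rw [if_neg (by omega), if_neg (by omega)]
  have hXmono : ∀ i, i < 2*N+2 → X i ≤ X (i+1) := by
    intro i hi
    by_cases h0 : 2*N+1 ≤ i
    · rw [hXb i h0, hXb (i+1) (by omega)]
    · push_neg at h0
      rcases Nat.even_or_odd i with ⟨k, hk⟩ | ⟨k, hk⟩
      · rcases Nat.eq_zero_or_pos i with h | h
        · subst h
          rw [hX0, show (0+1 : ℕ) = 2*0+1 from rfl, hXodd 0 (by omega)]
          calc a = aseq a b 0 := ha0.symm
            _ ≤ tn 0 := hlow 0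
        · -- i = 2k with k ≥ 1
          have hk1 : 1 ≤ k := by omega
          rw [show i = 2*(k-1)+2 from by omega, hXeven (k-1) (by omega)]
          by_cases h2 : i = 2*N
          · rw [show 2*(k-1)+2+1 = 2*N+1 from by omega, hXb _ le_rfl]
            exact hun_le_b _
          · rw [show 2*(k-1)+2+1 = 2*k+1 from by omega, hXodd k (by omega)]
            calc un (k-1) ≤ tn (k-1+1) := hchain _
              _ = tn k := by rw [show k-1+1 = k from by omega]
      · -- i = 2k+1
        rw [show i = 2*k+1 from by omega, hXodd k (by omega),
          show 2*k+1+1 = 2*k+2 from rfl, hXeven k (by omega)]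
        exact htnun k
  have hYmono : ∀ i, i < 2*N+2 → Y i ≤ Y (i+1) := by
    intro i hi
    simp only [hY]
    split_ifs <;>
      first
        | exact le_rfl
        | exact (‹False›).elim
        | omega
        | exact hcd.le
        | exact hy₀.1
        | exact hy₀.2
  have hsum := hbound (2*N+2) X Y hX0 (hXb _ (by omega))
      (by simp [hY]) (by simp only [hY]; rw [if_neg (by omega), if_pos (by omega)])
      hXmono hYmono
  -- lower bound for the sum
  have hterm : ∀ n ∈ Finset.range N,
      ε / ((n:ℝ)+1) = |T (X (2*n+1+1)) (Y (2*n+1+1)) - T (X (2*n+1)) (Y (2*n+1))| := by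
    intro n hn
    rw [Finset.mem_range] at hn
    rw [show 2*n+1+1 = 2*n+2 from rfl, hXeven n hn, hXodd n hn,
      hYmid (2*n+2) (by omega) (by omega), hYmid (2*n+1) (by omega) (by omega),
      hdiff n]
  have hinj : Set.InjOn (fun n => 2*n+1) ↑(Finset.range N) := by
    intro x _ y _ h
    have h' : 2*x+1 = 2*y+1 := h
    omega
  have hMlt : M < ∑ i ∈ Finset.range (2*N+2),
      |T (X (i+1)) (Y (i+1)) - T (X i) (Y i)| := by
    calc M < ε * ∑ i ∈ Finset.range N, (1 / (i + 1) : ℝ) := hNM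
      _ = ∑ n ∈ Finset.range N, ε / ((n:ℝ)+1) := by
          rw [Finset.mul_sum]
          exact Finset.sum_congr rfl fun n _ => by rw [mul_one_div]
      _ = ∑ n ∈ Finset.range N,
            |T (X (2*n+1+1)) (Y (2*n+1+1)) - T (X (2*n+1)) (Y (2*n+1))| :=
          Finset.sum_congr rfl hterm
      _ = ∑ i ∈ (Finset.range N).image (fun n => 2*n+1),
            |T (X (i+1)) (Y (i+1)) - T (X i) (Y i)| := by
          rw [Finset.sum_image (fun x hx y hy h => hinj hx hy h)]
      _ ≤ ∑ i ∈ Finset.range (2*N+2), |T (X (i+1)) (Y (i+1)) - T (X i) (Y i)| := by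
          apply Finset.sum_le_sum_of_subset_of_nonneg
          · intro i hi
            simp only [Finset.mem_image, Finset.mem_range] at hi ⊢
            obtain ⟨n, hn, rfl⟩ := hi
            show 2*n+1 < 2*N+2
            omega
          · intro i _ _
            exact abs_nonneg _
  linarith
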